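/- arXiv:1004.5407 — 2 statements merged into one kernel-verified Lean document; each statement's English description precedes it below -/
import Mathlib

section
/- For all p, q ∈ ℝ^N and c ≥ 1, with p₀ = √(c² + |p|²) and q₀ = √(c² + |q|²), the quantity g defined by g² = 2(p₀q₀ - p·q - c²) satisfies g² = 2(c²|p-q|² + |p×q|²)/(p₀q₀ + p·q + c²) (in dimension N=3), and hence c|p-q|/√(p₀q₀) ≤ g ≤ |p-q|. -/
set_option maxHeartbeats 1000000


open scoped RealInnerProductSpace

lemma cross_norm_sq (p q : EuclideanSpace ℝ (Fin 3)) :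
    ‖(WithLp.equiv 2 (Fin 3 → ℝ)).symm
        (crossProduct (WithLp.equiv 2 (Fin 3 → ℝ) p) (WithLp.equiv 2 (Fin 3 → ℝ) q))‖ ^ 2
      = ‖p‖ ^ 2 * ‖q‖ ^ 2 - ⟪p, q⟫ ^ 2 := by
  have h : ∀ x y : EuclideanSpace ℝ (Fin 3), ⟪x, y⟫ = x 0 * y 0 + x 1 * y 1 + x 2 * y 2 := by
    intro x y
    simp [PiLp.inner_apply, Fin.sum_univ_three, mul_comm]
  rw [← real_inner_self_eq_norm_sq, ← real_inner_self_eq_norm_sq, ← real_inner_self_eq_norm_sq]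
  simp only [h]
  simp [crossProduct, WithLp.equiv_symm_apply, WithLp.equiv_apply, PiLp.toLp_apply, Fin.sum_univ_three,
    Equiv.refl_apply, Matrix.cons_val_zero, Matrix.cons_val_one, Matrix.head_cons,
    Matrix.cons_val_two, Matrix.tail_cons]
  ring

/-- Relative momentum identity and bounds (dimension 3). -/
theorem stmt_0 (c : ℝ) (hc : 1 ≤ c) (p q : EuclideanSpace ℝ (Fin 3))
    (p0 q0 g : ℝ)
    (hp0 : p0 = Real.sqrt (c ^ 2 + ‖p‖ ^ 2))
    (hq0 : q0 = Real.sqrt (c ^ 2 + ‖q‖ ^ 2))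
    (hg : g = Real.sqrt (2 * (p0 * q0 - ⟪p, q⟫ - c ^ 2))) :
    g ^ 2 = 2 * (c ^ 2 * ‖p - q‖ ^ 2 +
        ‖(WithLp.equiv 2 (Fin 3 → ℝ)).symm
            (crossProduct (WithLp.equiv 2 (Fin 3 → ℝ) p) (WithLp.equiv 2 (Fin 3 → ℝ) q))‖ ^ 2)
        / (p0 * q0 + ⟪p, q⟫ + c ^ 2)
    ∧ c * ‖p - q‖ / Real.sqrt (p0 * q0) ≤ g
    ∧ g ≤ ‖p - q‖ := by
  have hcross := cross_norm_sq p q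
  set N : ℝ := ‖(WithLp.equiv 2 (Fin 3 → ℝ)).symm
            (crossProduct (WithLp.equiv 2 (Fin 3 → ℝ) p) (WithLp.equiv 2 (Fin 3 → ℝ) q))‖ ^ 2
    with hNdef
  set s : ℝ := ⟪p, q⟫ with hsdef
  set d : ℝ := ‖p - q‖ with hddef
  have hN0 : 0 ≤ N := by rw [hNdef]; positivity
  have hd0 : 0 ≤ d := norm_nonneg _
  have hc0 : (0 : ℝ) < c := lt_of_lt_of_le one_pos hc
  have hp0sq : p0 ^ 2 = c ^ 2 + ‖p‖ ^ 2 := by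
    rw [hp0, Real.sq_sqrt (by positivity)]
  have hq0sq : q0 ^ 2 = c ^ 2 + ‖q‖ ^ 2 := by
    rw [hq0, Real.sq_sqrt (by positivity)]
  have hp0pos : 0 < p0 := by
    rw [hp0]; exact Real.sqrt_pos.2 (by positivity)
  have hq0pos : 0 < q0 := by
    rw [hq0]; exact Real.sqrt_pos.2 (by positivity)
  have hcs : |s| ≤ ‖p‖ * ‖q‖ := abs_real_inner_le_norm p q
  have habs := abs_le.1 hcs
  have hkey : c ^ 2 + ‖p‖ * ‖q‖ ≤ p0 * q0 := by
    nlinarith [sq_nonneg (p0 * q0 - c ^ 2 - ‖p‖ * ‖q‖), sq_nonneg (‖p‖ - ‖q‖),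
      mul_pos hp0pos hq0pos, norm_nonneg p, norm_nonneg q,
      mul_nonneg (norm_nonneg p) (norm_nonneg q)]
  have hA : 0 ≤ p0 * q0 - s - c ^ 2 := by nlinarith
  have hD : 0 < p0 * q0 + s + c ^ 2 := by nlinarith
  have hg2 : g ^ 2 = 2 * (p0 * q0 - s - c ^ 2) := by
    rw [hg]; exact Real.sq_sqrt (by linarith)
  have hpq : d ^ 2 = ‖p‖ ^ 2 - 2 * s + ‖q‖ ^ 2 := by
    rw [hddef, hsdef, norm_sub_sq_real]
  have hAD : (p0 * q0 - s - c ^ 2) * (p0 * q0 + s + c ^ 2) = c ^ 2 * d ^ 2 + N := by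
    rw [hcross, hpq]
    linear_combination q0 ^ 2 * hp0sq + (c ^ 2 + ‖p‖ ^ 2) * hq0sq
  refine ⟨?_, ?_, ?_⟩
  · rw [hg2, ← hAD, mul_div_assoc, mul_div_cancel_right₀ _ (ne_of_gt hD)]
  · have hgn : 0 ≤ g := hg ▸ Real.sqrt_nonneg _
    have hpqD : 0 < Real.sqrt (p0 * q0) := Real.sqrt_pos.2 (mul_pos hp0pos hq0pos)
    rw [div_le_iff₀ hpqD]
    have h2 : 0 ≤ c * d := mul_nonneg (le_of_lt hc0) hd0
    have h3 : 0 ≤ g * Real.sqrt (p0 * q0) := mul_nonneg hgn (le_of_lt hpqD)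
    have h1 : (c * d) ^ 2 ≤ (g * Real.sqrt (p0 * q0)) ^ 2 := by
      have e : (g * Real.sqrt (p0 * q0)) ^ 2 = g ^ 2 * (p0 * q0) := by
        rw [mul_pow, Real.sq_sqrt (le_of_lt (mul_pos hp0pos hq0pos))]
      rw [e, hg2, mul_pow]
      have hDle : p0 * q0 + s + c ^ 2 ≤ 2 * (p0 * q0) := by nlinarith
      nlinarith [mul_nonneg hA (sub_nonneg.2 hDle)]
    calc c * d = Real.sqrt ((c * d) ^ 2) := (Real.sqrt_sq h2).symm
      _ ≤ Real.sqrt ((g * Real.sqrt (p0 * q0)) ^ 2) := Real.sqrt_le_sqrt h1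
      _ = g * Real.sqrt (p0 * q0) := Real.sqrt_sq h3
  · rw [hg]
    calc Real.sqrt (2 * (p0 * q0 - s - c ^ 2)) ≤ Real.sqrt (d ^ 2) := by
          apply Real.sqrt_le_sqrt
          rw [hpq]
          nlinarith [sq_nonneg (p0 - q0)]
      _ = d := Real.sqrt_sq hd0
end

section
/- (Invariance identity) Let c > 0 and p, q, p', q' ∈ ℝ^N with energies p₀ = √(c²+|p|²) etc., satisfying energy and momentum conservation p₀ + q₀ = p₀' + q₀' and p + q = p' + q'. Then for all t ∈ ℝ and x ∈ ℝ^N, with p̂ = cp/p₀ etc.: c³t²/q₀' + (q₀'/c)|x + t(p̂ - q̂')|² + c³t²/p₀' + (p₀'/c)|x + t(p̂ - p̂')|² = c³t²/p₀ + (p₀/c)|x|² + c³t²/q₀ + (q₀/c)|x + t(p̂ - q̂)|². -/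
lemma stmt_11_aux (N : ℕ) (c : ℝ) (hc : 0 < c)
    (v : EuclideanSpace ℝ (Fin N)) (v0 : ℝ)
    (hv0 : v0 = Real.sqrt (c ^ 2 + ‖v‖ ^ 2)) (t : ℝ) (y : EuclideanSpace ℝ (Fin N)) :
    c ^ 3 * t ^ 2 / v0 + (v0 / c) * ‖y - t • ((c / v0) • v)‖ ^ 2
      = c * t ^ 2 * v0 + (v0 / c) * ‖y‖ ^ 2 - 2 * t * (inner ℝ y v : ℝ) := by
  have hv0pos : 0 < v0 := hv0 ▸ Real.sqrt_pos.mpr (by positivity)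
  have hv0sq : v0 ^ 2 = c ^ 2 + ‖v‖ ^ 2 := by
    rw [hv0]; exact Real.sq_sqrt (by positivity)
  rw [norm_sub_sq_real]
  rw [norm_smul, norm_smul, real_inner_smul_right, real_inner_smul_right]
  simp only [Real.norm_eq_abs, mul_pow, sq_abs]
  have hc' : c ≠ 0 := hc.ne'
  have hv0' : v0 ≠ 0 := hv0pos.ne'
  field_simp
  linear_combination (-(c ^ 2 * t ^ 2)) * hv0sq

/-- The relativistic dispersion invariance identity under energy and momentum conservation. -/
theorem stmt_11 (N : ℕ) (c : ℝ) (hc : 0 < c)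
    (p q p' q' : EuclideanSpace ℝ (Fin N))
    (p0 q0 p0' q0' : ℝ)
    (hp0 : p0 = Real.sqrt (c ^ 2 + ‖p‖ ^ 2))
    (hq0 : q0 = Real.sqrt (c ^ 2 + ‖q‖ ^ 2))
    (hp0' : p0' = Real.sqrt (c ^ 2 + ‖p'‖ ^ 2))
    (hq0' : q0' = Real.sqrt (c ^ 2 + ‖q'‖ ^ 2))
    (hE : p0 + q0 = p0' + q0')
    (hM : p + q = p' + q')
    (t : ℝ) (x : EuclideanSpace ℝ (Fin N)) :
    c ^ 3 * t ^ 2 / q0' + (q0' / c) * ‖x + t • ((c / p0) • p - (c / q0') • q')‖ ^ 2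
      + c ^ 3 * t ^ 2 / p0' + (p0' / c) * ‖x + t • ((c / p0) • p - (c / p0') • p')‖ ^ 2
    = c ^ 3 * t ^ 2 / p0 + (p0 / c) * ‖x‖ ^ 2
      + c ^ 3 * t ^ 2 / q0 + (q0 / c) * ‖x + t • ((c / p0) • p - (c / q0) • q)‖ ^ 2 := by
  set y : EuclideanSpace ℝ (Fin N) := x + t • ((c / p0) • p) with hy
  have hx : x = y - t • ((c / p0) • p) := by rw [hy]; abel
  have h1 : ∀ (w0 : ℝ) (w : EuclideanSpace ℝ (Fin N)),
      x + t • ((c / p0) • p - (c / w0) • w) = y - t • ((c / w0) • w) := by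
    intro w0 w
    rw [smul_sub, hy]; abel
  rw [h1, h1, h1, hx]
  have e1 := stmt_11_aux N c hc q' q0' hq0' t y
  have e2 := stmt_11_aux N c hc p' p0' hp0' t y
  have e3 := stmt_11_aux N c hc p p0 hp0 t y
  have e4 := stmt_11_aux N c hc q q0 hq0 t y
  have hI : (inner ℝ y p : ℝ) + inner ℝ y q = (inner ℝ y p' : ℝ) + inner ℝ y q' := by
    rw [← inner_add_right, ← inner_add_right, hM]
  have hcne : c ≠ 0 := hc.ne'
  linear_combination e1 + e2 - e3 - e4 - (c * t ^ 2 + ‖y‖ ^ 2 / c) * hE + 2 * t * hI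
end
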